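/- Let a₁, b₁, c₁ > 0 satisfy the strict triangle inequalities (a₁ < b₁ + c₁, b₁ < c₁ + a₁, c₁ < a₁ + b₁) and suppose (a₁, b₁, c₁) is not proportional to (a, b, c), i.e. there is no t > 0 with a₁ = t·a, b₁ = t·b, c₁ = t·c. Then the set S = {M : b₁ · (a · dist M A) = a₁ · (b · dist M B) and c₁ · (b · dist M B) = b₁ · (c · dist M C)} of points whose distances satisfy (a·MA) : (b·MB) : (c·MC) = a₁ : b₁ : c₁ has exactly two elements: there exist M ≠ N with S = {M, N}. -/

import Mathlib

open EuclideanGeometry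

noncomputable section

lemma sq_iff_of_nonneg {s t : ℝ} (hs : 0 ≤ s) (ht : 0 ≤ t) : s = t ↔ s^2 = t^2 := by
  constructor
  · rintro rfl; rfl
  · intro h; nlinarith

lemma dist_sq_coords (X Y : EuclideanSpace ℝ (Fin 2)) :
    (dist X Y)^2 = (X 0 - Y 0)^2 + (X 1 - Y 1)^2 := by
  rw [EuclideanSpace.dist_eq, Real.sq_sqrt (by positivity)]
  simp [Fin.sum_univ_two, Real.dist_eq, sq_abs]

set_option maxHeartbeats 4000000 in
lemma core (cc p q a₁ b₁ c₁ : ℝ) (hcc : cc ≠ 0) (hq : q ≠ 0)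
    (ha₁ : 0 < a₁) (hb₁ : 0 < b₁) (hc₁ : 0 < c₁)
    (ht₁ : a₁ < b₁ + c₁) (ht₂ : b₁ < c₁ + a₁) (ht₃ : c₁ < a₁ + b₁)
    (hNP : ¬ (a₁^2*(p^2+q^2) = b₁^2*((p-cc)^2+q^2) ∧ b₁^2*cc^2 = c₁^2*(p^2+q^2))) :
    ∃ m0 m1 n0 n1 : ℝ, (m0 ≠ n0 ∨ m1 ≠ n1) ∧ ∀ x y : ℝ,
      (b₁^2 * (((p-cc)^2+q^2) * (x^2+y^2)) = a₁^2 * ((p^2+q^2) * ((x-cc)^2+y^2)) ∧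
       c₁^2 * ((p^2+q^2) * ((x-cc)^2+y^2)) = b₁^2 * (cc^2 * ((x-p)^2+(y-q)^2)))
      ↔ ((x = m0 ∧ y = m1) ∨ (x = n0 ∧ y = n1)) := by
  have ha2 : (0:ℝ) < (p-cc)^2+q^2 := by positivity
  have hb2 : (0:ℝ) < p^2+q^2 := by positivity
  have hc2 : (0:ℝ) < cc^2 := by positivity
  obtain ⟨KA, hKA⟩ : ∃ t : ℝ, t = a₁^2*(p^2+q^2)*cc^2 := ⟨_, rfl⟩
  obtain ⟨KB, hKB⟩ : ∃ t : ℝ, t = b₁^2*((p-cc)^2+q^2)*cc^2 := ⟨_, rfl⟩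
  obtain ⟨KC, hKC⟩ : ∃ t : ℝ, t = c₁^2*((p-cc)^2+q^2)*(p^2+q^2) := ⟨_, rfl⟩
  obtain ⟨O0, hO0⟩ : ∃ t : ℝ, t = cc/2 := ⟨_, rfl⟩
  obtain ⟨O1, hO1⟩ : ∃ t : ℝ, t = ((p^2+q^2) - cc*p)/(2*q) := ⟨_, rfl⟩
  obtain ⟨Q0, hQ0⟩ : ∃ t : ℝ, t = (KA-KB)/(2*cc) := ⟨_, rfl⟩
  obtain ⟨Q1, hQ1⟩ : ∃ t : ℝ, t = (cc*(KB-KC) - (p-cc)*(KA-KB))/(2*cc*q) := ⟨_, rfl⟩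
  obtain ⟨e2, he2⟩ : ∃ t : ℝ, t = Q0^2+Q1^2 := ⟨_, rfl⟩
  obtain ⟨e1, he1⟩ : ∃ t : ℝ, t = 2*(O0*Q0+O1*Q1) - KA := ⟨_, rfl⟩
  obtain ⟨e0, he0⟩ : ∃ t : ℝ, t = O0^2+O1^2 := ⟨_, rfl⟩
  obtain ⟨D, hD⟩ : ∃ t : ℝ, t = e1^2 - 4*e0*e2 := ⟨_, rfl⟩
  have hKApos : 0 < KA := by rw [hKA]; exact mul_pos (mul_pos (pow_pos ha₁ 2) hb2) hc2
  have hDid : D * (4*cc^2*q^2)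
      = (((p-cc)^2+q^2)*(p^2+q^2)*cc^2)^2
        * ((a₁+b₁+c₁)*(-a₁+b₁+c₁)*(a₁-b₁+c₁)*(a₁+b₁-c₁)) := by
    simp only [hD, he1, he2, he0, hQ0, hQ1, hO0, hO1, hKA, hKB, hKC]
    field_simp
    ring
  have hprodpos : 0 < (a₁+b₁+c₁)*(-a₁+b₁+c₁)*(a₁-b₁+c₁)*(a₁+b₁-c₁) := by
    have h1 : 0 < a₁+b₁+c₁ := by linarith
    have h2 : 0 < -a₁+b₁+c₁ := by linarith
    have h3 : 0 < a₁-b₁+c₁ := by linarith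
    have h4 : 0 < a₁+b₁-c₁ := by linarith
    positivity
  have hDpos : 0 < D := by
    have h4 : (0:ℝ) < 4*cc^2*q^2 := by positivity
    have habc : 0 < ((p-cc)^2+q^2)*(p^2+q^2)*cc^2 := mul_pos (mul_pos ha2 hb2) hc2
    have h5 : 0 < (((p-cc)^2+q^2)*(p^2+q^2)*cc^2)^2
        * ((a₁+b₁+c₁)*(-a₁+b₁+c₁)*(a₁-b₁+c₁)*(a₁+b₁-c₁)) :=
      mul_pos (pow_pos habc 2) hprodpos
    have h6 : 0 < D * (4*cc^2*q^2) := by rw [hDid]; exact h5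
    have h7' : D = D * (4*cc^2*q^2) / (4*cc^2*q^2) := by field_simp
    rw [h7']; exact div_pos h6 h4
  clear hDid
  have he2nonneg : 0 ≤ e2 := by rw [he2]; positivity
  have he2pos : 0 < e2 := by
    rcases lt_or_eq_of_le he2nonneg with h | h
    · exact h
    · exfalso
      have hQQ : Q0^2 + Q1^2 = 0 := by rw [← he2, ← h]
      obtain ⟨h01, h02⟩ := (add_eq_zero_iff_of_nonneg (sq_nonneg Q0) (sq_nonneg Q1)).mp hQQ
      have hQ00 : Q0 = 0 := sq_eq_zero_iff.mp h01
      have hQ10 : Q1 = 0 := sq_eq_zero_iff.mp h02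
      have hAB : KA = KB := by
        have h'' : (KA-KB)/(2*cc) = 0 := hQ0.symm.trans hQ00
        linear_combination (norm := (field_simp; try ring1; try ring)) 2*cc*h''
      have hBC : KB = KC := by
        have h'' : (cc*(KB-KC) - (p-cc)*(KA-KB))/(2*cc*q) = 0 := hQ1.symm.trans hQ10
        linear_combination (norm := (field_simp; try ring1; try ring)) 2*q*h'' + ((p-cc)/cc)*hAB
      apply hNP
      constructor
      · rw [hKA, hKB] at hAB
        have h6 : (a₁^2*(p^2+q^2) - b₁^2*((p-cc)^2+q^2)) * cc^2 = 0 := by linear_combination hAB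
        rcases mul_eq_zero.mp h6 with h' | h'
        · linarith
        · exact absurd h' (ne_of_gt hc2)
      · rw [hKB, hKC] at hBC
        have h6 : (b₁^2*cc^2 - c₁^2*(p^2+q^2)) * ((p-cc)^2+q^2) = 0 := by linear_combination hBC
        rcases mul_eq_zero.mp h6 with h' | h'
        · linarith
        · exact absurd h' (ne_of_gt ha2)
  have he2ne : e2 ≠ 0 := ne_of_gt he2pos
  obtain ⟨s, hsd⟩ : ∃ t : ℝ, t = Real.sqrt D := ⟨_, rfl⟩
  have hs2 : s^2 = D := by rw [hsd]; exact Real.sq_sqrt hDpos.le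
  have hspos : 0 < s := by rw [hsd]; exact Real.sqrt_pos.2 hDpos
  have h7 : s^2 = e1^2 - 4*e0*e2 := by rw [hs2, hD]
  obtain ⟨l1, hl1⟩ : ∃ t : ℝ, t = (-e1+s)/(2*e2) := ⟨_, rfl⟩
  obtain ⟨l2, hl2⟩ : ∃ t : ℝ, t = (-e1-s)/(2*e2) := ⟨_, rfl⟩
  have hsum' : e2*(l1+l2) = -e1 := by rw [hl1, hl2]; field_simp; ring
  have hprodl' : e2*(l1*l2) = e0 := by
    rw [hl1, hl2]; field_simp; linear_combination -h7
  have hlne : l1 ≠ l2 := by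
    intro h
    rw [hl1, hl2] at h
    have hs0 : s = 0 := by linear_combination (norm := (field_simp; try ring1; try ring)) e2*h
    linarith
  have hroot : ∀ l : ℝ, l = l1 ∨ l = l2 → e2*l^2 + e1*l + e0 = 0 := by
    rintro l (rfl | rfl)
    · rw [hl1]; linear_combination (norm := (field_simp; try ring1; try ring)) h7/(4*e2)
    · rw [hl2]; linear_combination (norm := (field_simp; try ring1; try ring)) h7/(4*e2)
  refine ⟨O0 + l1*Q0, O1 + l1*Q1, O0 + l2*Q0, O1 + l2*Q1, ?_, ?_⟩
  · by_contra hcon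
    push_neg at hcon
    obtain ⟨h0, h1⟩ := hcon
    have hQ00 : Q0 = 0 := by
      rcases mul_eq_zero.mp (by linear_combination h0 : (l1 - l2)*Q0 = 0) with h' | h'
      · exact absurd (by linarith : l1 = l2) hlne
      · exact h'
    have hQ10 : Q1 = 0 := by
      rcases mul_eq_zero.mp (by linear_combination h1 : (l1 - l2)*Q1 = 0) with h' | h'
      · exact absurd (by linarith : l1 = l2) hlne
      · exact h'
    rw [he2, hQ00, hQ10] at he2pos
    norm_num at he2pos
  intro x y
  constructor
  · rintro ⟨hE1, hE2⟩
    obtain ⟨l, hl⟩ : ∃ t : ℝ, t = (x^2+y^2)/KA := ⟨_, rfl⟩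
    have hDA : x^2+y^2 = l*KA := by rw [hl]; field_simp
    have hDB : (x-cc)^2+y^2 = l*KB := by
      have h8 : a₁^2*(p^2+q^2)*((x-cc)^2+y^2) = a₁^2*(p^2+q^2)*(l*KB) := by
        simp only [hKA, hKB] at hDA ⊢
        linear_combination -hE1 + b₁^2*((p-cc)^2+q^2)*hDA
      exact mul_left_cancel₀ (ne_of_gt (mul_pos (pow_pos ha₁ 2) hb2)) h8
    have hDC : (x-p)^2+(y-q)^2 = l*KC := by
      have h9 : b₁^2*cc^2*((x-p)^2+(y-q)^2) = b₁^2*cc^2*(l*KC) := by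
        simp only [hKB, hKC] at hDB ⊢
        linear_combination -hE2 + c₁^2*(p^2+q^2)*hDB
      exact mul_left_cancel₀ (ne_of_gt (mul_pos (pow_pos hb₁ 2) hc2)) h9
    have h12 : 2*cc*x = cc^2 + l*(KA-KB) := by linear_combination hDA - hDB
    have hx : x = O0 + l*Q0 := by
      rw [hO0, hQ0]; linear_combination (norm := (field_simp; try ring1; try ring)) h12/(2*cc)
    have h10 : 2*q*y = l*(KB-KC) - 2*(p-cc)*x - cc^2 + (p^2+q^2) := by
      linear_combination hDB - hDC
    have hy : y = O1 + l*Q1 := by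
      rw [hO1, hQ1]
      linear_combination (norm := (field_simp; try ring1; try ring)) h10/(2*q) - ((p-cc)/(2*cc*q))*h12
    have hquadl : e2*l^2 + e1*l + e0 = 0 := by
      simp only [he2, he1, he0]
      linear_combination hDA - (x + O0 + l*Q0)*hx - (y + O1 + l*Q1)*hy
    have h13 : e2*((l-l1)*(l-l2)) = 0 := by
      linear_combination hquadl - l*hsum' + hprodl'
    rcases mul_eq_zero.mp ((mul_eq_zero.mp h13).resolve_left he2ne) with h' | h'
    · left; constructor
      · rw [hx, (by linarith : l = l1)]
      · rw [hy, (by linarith : l = l1)]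
    · right; constructor
      · rw [hx, (by linarith : l = l2)]
      · rw [hy, (by linarith : l = l2)]
  · intro hmem
    have hxy : ∃ l : ℝ, (l = l1 ∨ l = l2) ∧ x = O0 + l*Q0 ∧ y = O1 + l*Q1 := by
      rcases hmem with ⟨hx, hy⟩ | ⟨hx, hy⟩
      · exact ⟨l1, Or.inl rfl, hx, hy⟩
      · exact ⟨l2, Or.inr rfl, hx, hy⟩
    obtain ⟨l, hl12, hx, hy⟩ := hxy
    have hql : e2*l^2 + e1*l + e0 = 0 := hroot l hl12
    have hDA : x^2+y^2 = l*KA := by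
      rw [hx, hy]
      simp only [he2, he1, he0] at hql
      linear_combination hql
    have h15 : 2*cc*(O0 + l*Q0) = cc^2 + l*(KA-KB) := by
      rw [hO0, hQ0]; field_simp
    have hDB : (x-cc)^2+y^2 = l*KB := by
      rw [hx, hy]
      rw [hx] at hDA
      rw [hy] at hDA
      linear_combination hDA - h15
    have h16 : 2*(p-cc)*(O0+l*Q0) + 2*q*(O1+l*Q1) + cc^2 - (p^2+q^2) = l*(KB-KC) := by
      rw [hO0, hO1, hQ0, hQ1]; field_simp; ring
    have hDC : (x-p)^2+(y-q)^2 = l*KC := by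
      rw [hx, hy]
      rw [hx, hy] at hDB
      linear_combination hDB - h16
    constructor
    · simp only [hKA, hKB] at hDA hDB
      linear_combination b₁^2*((p-cc)^2+q^2)*hDA - a₁^2*(p^2+q^2)*hDB
    · simp only [hKB, hKC] at hDB hDC
      linear_combination c₁^2*(p^2+q^2)*hDB - b₁^2*cc^2*hDC


set_option maxHeartbeats 2000000 in
theorem stmt1 (A B C O : EuclideanSpace ℝ (Fin 2)) (R a b c a₁ b₁ c₁ : ℝ)
    (hABC : AffineIndependent ℝ ![A, B, C])
    (hR : 0 < R) (hOA : dist O A = R) (hOB : dist O B = R) (hOC : dist O C = R)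
    (ha : a = dist B C) (hb : b = dist C A) (hc : c = dist A B)
    (ha₁ : 0 < a₁) (hb₁ : 0 < b₁) (hc₁ : 0 < c₁)
    (htri₁ : a₁ < b₁ + c₁) (htri₂ : b₁ < c₁ + a₁) (htri₃ : c₁ < a₁ + b₁)
    (hprop : ¬ ∃ t : ℝ, 0 < t ∧ a₁ = t * a ∧ b₁ = t * b ∧ c₁ = t * c) :
    ∃ M N : EuclideanSpace ℝ (Fin 2), M ≠ N ∧
      {X : EuclideanSpace ℝ (Fin 2) |
          b₁ * (a * dist X A) = a₁ * (b * dist X B) ∧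
          c₁ * (b * dist X B) = b₁ * (c * dist X C)} = {M, N} := by
  have hAB : A ≠ B := fun h => (by decide : (0:Fin 3) ≠ 1) (hABC.injective (by simpa using h))
  have hCA : C ≠ A := fun h => (by decide : (2:Fin 3) ≠ 0) (hABC.injective (by simpa using h))
  have hBC : B ≠ C := fun h => (by decide : (1:Fin 3) ≠ 2) (hABC.injective (by simpa using h))
  have hc0 : 0 < c := hc ▸ dist_pos.2 hAB
  have hb0 : 0 < b := hb ▸ dist_pos.2 hCA
  have ha0 : 0 < a := ha ▸ dist_pos.2 hBC
  have hcne : c ≠ 0 := ne_of_gt hc0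
  obtain ⟨u0, hu0⟩ : ∃ t : ℝ, t = B 0 - A 0 := ⟨_, rfl⟩
  obtain ⟨u1, hu1⟩ : ∃ t : ℝ, t = B 1 - A 1 := ⟨_, rfl⟩
  obtain ⟨v0, hv0⟩ : ∃ t : ℝ, t = C 0 - A 0 := ⟨_, rfl⟩
  obtain ⟨v1, hv1⟩ : ∃ t : ℝ, t = C 1 - A 1 := ⟨_, rfl⟩
  have hc2 : c^2 = u0^2 + u1^2 := by
    rw [hu0, hu1, hc, EuclideanSpace.dist_eq, Real.sq_sqrt (by positivity)]
    simp [Fin.sum_univ_two, Real.dist_eq, sq_abs]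
    try ring
  have hb2 : b^2 = v0^2 + v1^2 := by
    rw [hv0, hv1, hb, EuclideanSpace.dist_eq, Real.sq_sqrt (by positivity)]
    simp [Fin.sum_univ_two, Real.dist_eq, sq_abs]
    try ring
  have ha2 : a^2 = (v0-u0)^2 + (v1-u1)^2 := by
    rw [hu0, hu1, hv0, hv1, ha, EuclideanSpace.dist_eq, Real.sq_sqrt (by positivity)]
    simp [Fin.sum_univ_two, Real.dist_eq, sq_abs]
    try ring
  have huu : u0^2 + u1^2 ≠ 0 := by rw [← hc2]; positivity
  have hd : u0*v1 - u1*v0 ≠ 0 := by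
    intro h
    rw [hu0, hu1, hv0, hv1] at h
    apply affineIndependent_iff_not_collinear_set.mp hABC
    rw [collinear_iff_of_mem (show A ∈ ({A, B, C} : Set _) by simp)]
    refine ⟨B - A, ?_⟩
    intro P hP
    simp only [Set.mem_insert_iff, Set.mem_singleton_iff] at hP
    rcases hP with rfl | rfl | hPC
    · exact ⟨0, by simp⟩
    · exact ⟨1, by simp [vadd_eq_add]⟩
    · refine ⟨((C 0 - A 0)*(B 0 - A 0)+(C 1 - A 1)*(B 1 - A 1))/((B 0 - A 0)^2+(B 1 - A 1)^2), ?_⟩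
      rw [hPC]
      have huu' : (B 0 - A 0)^2+(B 1 - A 1)^2 ≠ 0 := by rw [hu0, hu1] at huu; exact huu
      ext i
      simp only [vadd_eq_add, PiLp.add_apply, PiLp.smul_apply, PiLp.sub_apply, smul_eq_mul]
      fin_cases i
      · simp only [Fin.zero_eta]; field_simp
        linear_combination -(B 1 - A 1)*h
      · simp only [Fin.mk_one]; field_simp
        linear_combination (B 0 - A 0)*h
  obtain ⟨p, hp⟩ : ∃ t : ℝ, t = (v0*u0+v1*u1)/c := ⟨_, rfl⟩
  obtain ⟨q, hqd⟩ : ∃ t : ℝ, t = (u0*v1-u1*v0)/c := ⟨_, rfl⟩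
  have hqne : q ≠ 0 := by rw [hqd]; exact div_ne_zero hd hcne
  have hpq : p^2+q^2 = b^2 := by
    rw [hp, hqd]; field_simp
    linear_combination (-(c^2))*hb2 - (v0^2+v1^2)*hc2
  have hpcq : (p-c)^2+q^2 = a^2 := by
    rw [hp, hqd]; field_simp
    linear_combination (-(c^2))*ha2 + (c^2-(v0^2+v1^2))*hc2
  have hNP : ¬ (a₁^2*(p^2+q^2) = b₁^2*((p-c)^2+q^2) ∧ b₁^2*c^2 = c₁^2*(p^2+q^2)) := by
    rintro ⟨h1, h2⟩
    rw [hpq, hpcq] at h1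
    rw [hpq] at h2
    apply hprop
    refine ⟨a₁/a, div_pos ha₁ ha0, by field_simp, ?_, ?_⟩
    · refine (sq_iff_of_nonneg hb₁.le (le_of_lt (mul_pos (div_pos ha₁ ha0) hb0))).mpr ?_
      field_simp
      linear_combination -h1
    · have h3 : (c₁^2*a^2)*b^2 = (a₁^2*c^2)*b^2 := by
        linear_combination (-(a^2))*h2 - (c^2)*h1
      have h4 : c₁^2*a^2 = a₁^2*c^2 := mul_right_cancel₀ (ne_of_gt (pow_pos hb0 2)) h3
      refine (sq_iff_of_nonneg hc₁.le (le_of_lt (mul_pos (div_pos ha₁ ha0) hc0))).mpr ?_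
      field_simp
      linear_combination h4
  obtain ⟨m0, m1, n0, n1, hmn, hiff⟩ :=
    core c p q a₁ b₁ c₁ hcne hqne ha₁ hb₁ hc₁ htri₁ htri₂ htri₃ hNP
  obtain ⟨M, hM⟩ : ∃ P : EuclideanSpace ℝ (Fin 2),
      P = !₂[A 0 + (m0*u0 - m1*u1)/c, A 1 + (m0*u1 + m1*u0)/c] := ⟨_, rfl⟩
  obtain ⟨N, hN⟩ : ∃ P : EuclideanSpace ℝ (Fin 2),
      P = !₂[A 0 + (n0*u0 - n1*u1)/c, A 1 + (n0*u1 + n1*u0)/c] := ⟨_, rfl⟩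
  have hM0 : M 0 = A 0 + (m0*u0 - m1*u1)/c := by rw [hM]; rfl
  have hM1 : M 1 = A 1 + (m0*u1 + m1*u0)/c := by rw [hM]; rfl
  have hN0 : N 0 = A 0 + (n0*u0 - n1*u1)/c := by rw [hN]; rfl
  have hN1 : N 1 = A 1 + (n0*u1 + n1*u0)/c := by rw [hN]; rfl
  refine ⟨M, N, ?_, ?_⟩
  · intro hMN
    have h0 : M 0 = N 0 := by rw [hMN]
    have h1 : M 1 = N 1 := by rw [hMN]
    rw [hM0, hN0] at h0
    rw [hM1, hN1] at h1
    have h0' : m0*u0 - m1*u1 = n0*u0 - n1*u1 :=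
      mul_right_cancel₀ hcne (show (m0*u0 - m1*u1)*c = (n0*u0 - n1*u1)*c by
        linear_combination (norm := (field_simp; try ring1; try ring)) c^2*h0)
    have h1' : m0*u1 + m1*u0 = n0*u1 + n1*u0 :=
      mul_right_cancel₀ hcne (show (m0*u1 + m1*u0)*c = (n0*u1 + n1*u0)*c by
        linear_combination (norm := (field_simp; try ring1; try ring)) c^2*h1)
    have e0' : (m0-n0)*(u0^2+u1^2) = 0 := by linear_combination u0*h0' + u1*h1'
    have e1' : (m1-n1)*(u0^2+u1^2) = 0 := by linear_combination u0*h1' - u1*h0'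
    have hm0n0 : m0 = n0 := by
      rcases mul_eq_zero.mp e0' with h' | h'
      · linarith
      · exact absurd h' huu
    have hm1n1 : m1 = n1 := by
      rcases mul_eq_zero.mp e1' with h' | h'
      · linarith
      · exact absurd h' huu
    rcases hmn with h | h
    · exact h hm0n0
    · exact h hm1n1
  · ext X
    simp only [Set.mem_setOf_eq, Set.mem_insert_iff, Set.mem_singleton_iff]
    obtain ⟨w0, hw0⟩ : ∃ t : ℝ, t = X 0 - A 0 := ⟨_, rfl⟩
    obtain ⟨w1, hw1⟩ : ∃ t : ℝ, t = X 1 - A 1 := ⟨_, rfl⟩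
    obtain ⟨x, hx⟩ : ∃ t : ℝ, t = (w0*u0+w1*u1)/c := ⟨_, rfl⟩
    obtain ⟨y, hy⟩ : ∃ t : ℝ, t = (u0*w1-u1*w0)/c := ⟨_, rfl⟩
    have hX0 : X 0 = A 0 + w0 := by rw [hw0]; ring
    have hX1 : X 1 = A 1 + w1 := by rw [hw1]; ring
    have hB0 : B 0 = A 0 + u0 := by rw [hu0]; ring
    have hB1 : B 1 = A 1 + u1 := by rw [hu1]; ring
    have hC0 : C 0 = A 0 + v0 := by rw [hv0]; ring
    have hC1 : C 1 = A 1 + v1 := by rw [hv1]; ring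
    have hdA : (dist X A)^2 = x^2+y^2 := by
      rw [dist_sq_coords, hx, hy, hX0, hX1]
      linear_combination (norm := (field_simp; try ring1; try ring)) ((w0^2+w1^2)/c^2) * hc2
    have hdB : (dist X B)^2 = (x-c)^2+y^2 := by
      rw [dist_sq_coords, hx, hy, hX0, hX1, hB0, hB1]
      linear_combination (norm := (field_simp; try ring1; try ring)) ((w0^2+w1^2)/c^2 - 1) * hc2
    have hdC : (dist X C)^2 = (x-p)^2+(y-q)^2 := by
      rw [dist_sq_coords, hx, hy, hX0, hX1, hC0, hC1, hp, hqd]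
      linear_combination (norm := (field_simp; try ring1; try ring)) (((w0-v0)^2+(w1-v1)^2)/c^2) * hc2
    have l1 : (b₁*(a*dist X A))^2 = b₁^2 * (((p-c)^2+q^2) * (x^2+y^2)) := by
      have h : (b₁*(a*dist X A))^2 = b₁^2*(a^2*(dist X A)^2) := by ring
      rw [h, hdA, ← hpcq]
    have l2 : (a₁*(b*dist X B))^2 = a₁^2 * ((p^2+q^2) * ((x-c)^2+y^2)) := by
      have h : (a₁*(b*dist X B))^2 = a₁^2*(b^2*(dist X B)^2) := by ring
      rw [h, hdB, ← hpq]
    have l3 : (c₁*(b*dist X B))^2 = c₁^2 * ((p^2+q^2) * ((x-c)^2+y^2)) := by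
      have h : (c₁*(b*dist X B))^2 = c₁^2*(b^2*(dist X B)^2) := by ring
      rw [h, hdB, ← hpq]
    have l4 : (b₁*(c*dist X C))^2 = b₁^2 * (c^2 * ((x-p)^2+(y-q)^2)) := by
      have h : (b₁*(c*dist X C))^2 = b₁^2*(c^2*(dist X C)^2) := by ring
      rw [h, hdC]
    have e1iff : (b₁ * (a * dist X A) = a₁ * (b * dist X B)) ↔
        b₁^2 * (((p-c)^2+q^2) * (x^2+y^2)) = a₁^2 * ((p^2+q^2) * ((x-c)^2+y^2)) := by
      rw [sq_iff_of_nonneg (mul_nonneg hb₁.le (mul_nonneg ha0.le dist_nonneg))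
        (mul_nonneg ha₁.le (mul_nonneg hb0.le dist_nonneg)), l1, l2]
    have e2iff : (c₁ * (b * dist X B) = b₁ * (c * dist X C)) ↔
        c₁^2 * ((p^2+q^2) * ((x-c)^2+y^2)) = b₁^2 * (c^2 * ((x-p)^2+(y-q)^2)) := by
      rw [sq_iff_of_nonneg (mul_nonneg hc₁.le (mul_nonneg hb0.le dist_nonneg))
        (mul_nonneg hb₁.le (mul_nonneg hc0.le dist_nonneg)), l3, l4]
    rw [e1iff, e2iff, hiff x y]
    have hxc : x*c = w0*u0+w1*u1 := by rw [hx]; exact div_mul_cancel₀ _ hcne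
    have hyc : y*c = u0*w1-u1*w0 := by rw [hy]; exact div_mul_cancel₀ _ hcne
    have hW0 : w0*c = x*u0 - y*u1 := by
      refine mul_right_cancel₀ hcne ?_
      have hw0v : w0*(u0^2+u1^2) = (x*u0 - y*u1)*c := by
        linear_combination -u0*hxc + u1*hyc
      linear_combination hw0v + w0*hc2
    have hW1 : w1*c = x*u1 + y*u0 := by
      refine mul_right_cancel₀ hcne ?_
      have hw1v : w1*(u0^2+u1^2) = (x*u1 + y*u0)*c := by
        linear_combination -u1*hxc - u0*hyc
      linear_combination hw1v + w1*hc2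
    have hXM : (x = m0 ∧ y = m1) ↔ X = M := by
      constructor
      · rintro ⟨hxm, hym⟩
        rw [hM]
        ext i
        fin_cases i
        · show X 0 = A 0 + (m0*u0 - m1*u1)/c
          rw [← hxm, ← hym, hX0]
          linear_combination (norm := (field_simp; try ring1; try ring)) hW0/c
        · show X 1 = A 1 + (m0*u1 + m1*u0)/c
          rw [← hxm, ← hym, hX1]
          linear_combination (norm := (field_simp; try ring1; try ring)) hW1/c
      · rintro rfl
        constructor
        · rw [hx, hw0, hw1, hM0, hM1]
          linear_combination (norm := (field_simp; try ring1; try ring)) (-(m0/c^2))*hc2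
        · rw [hy, hw0, hw1, hM0, hM1]
          linear_combination (norm := (field_simp; try ring1; try ring)) (-(m1/c^2))*hc2
    have hXN : (x = n0 ∧ y = n1) ↔ X = N := by
      constructor
      · rintro ⟨hxm, hym⟩
        rw [hN]
        ext i
        fin_cases i
        · show X 0 = A 0 + (n0*u0 - n1*u1)/c
          rw [← hxm, ← hym, hX0]
          linear_combination (norm := (field_simp; try ring1; try ring)) hW0/c
        · show X 1 = A 1 + (n0*u1 + n1*u0)/c
          rw [← hxm, ← hym, hX1]
          linear_combination (norm := (field_simp; try ring1; try ring)) hW1/c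
      · rintro rfl
        constructor
        · rw [hx, hw0, hw1, hN0, hN1]
          linear_combination (norm := (field_simp; try ring1; try ring)) (-(n0/c^2))*hc2
        · rw [hy, hw0, hw1, hN0, hN1]
          linear_combination (norm := (field_simp; try ring1; try ring)) (-(n1/c^2))*hc2
    exact or_congr hXM hXN
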